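/- Let ℓ be a positive odd integer and ζ ∈ ℂ a primitive ℓ-th root of unity. Write a nonnegative integer n as n = ℓ n₁ + n₀ with 0 ≤ n₀ < ℓ, and similarly m = ℓ m₁ + m₀ with 0 ≤ m₀ < ℓ. Then the balanced Gaussian binomial evaluated at ζ satisfies [n choose m]_ζ = (n₁ choose m₁) · [n₀ choose m₀]_ζ whenever m₀ ≤ n₀, and [n choose m]_ζ = 0 if m ≤ n and m₀ > n₀. -/

import Mathlib

/-- The balanced Gaussian binomial `[n choose k]_ζ`, i.e. the evaluation at `q = ζ ∈ ℂˣ` of the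
Laurent polynomial `[n choose k]_q ∈ ℤ[q,q⁻¹]`, defined via the balanced Pascal recursion
`[n+1 choose k+1]_q = q^{-(k+1)} [n choose k+1]_q + q^{n-k} [n choose k]_q`. -/
noncomputable def qbinomC (ζ : ℂ) : ℕ → ℕ → ℂ
  | _, 0 => 1
  | 0, _ + 1 => 0
  | n + 1, k + 1 =>
      ζ⁻¹ ^ (k + 1) * qbinomC ζ n (k + 1) + ζ ^ (n - k) * qbinomC ζ n k

open Polynomial Finset

lemma qbinomC_succ_succ (ζ : ℂ) (n k : ℕ) :
    qbinomC ζ (n + 1) (k + 1)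
      = ζ⁻¹ ^ (k + 1) * qbinomC ζ n (k + 1) + ζ ^ (n - k) * qbinomC ζ n k := rfl

lemma qbinomC_zero (ζ : ℂ) (n : ℕ) : qbinomC ζ n 0 = 1 := by
  cases n <;> rfl

lemma qbinomC_eq_zero_of_lt (ζ : ℂ) : ∀ n k : ℕ, n < k → qbinomC ζ n k = 0 := by
  intro n
  induction n with
  | zero =>
    intro k hk
    cases k with
    | zero => omega
    | succ k => rfl
  | succ n ih =>
    intro k hk
    cases k with
    | zero => omega
    | succ k =>
      rw [qbinomC_succ_succ, ih (k + 1) (by omega), ih k (by omega)]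
      ring

/-- coefficient of a product with a linear factor -/
lemma coeff_mul_linear (P : Polynomial ℂ) (c : ℂ) (m : ℕ) :
    (P * (C c * X + 1)).coeff m = c * (P * X).coeff m + P.coeff m := by
  have h : P * (C c * X + 1) = C c * (P * X) + P := by ring
  rw [h, coeff_add, coeff_C_mul]

lemma coeff_prod_scale (b : ℂ) (f : ℕ → ℂ) (n : ℕ) : ∀ m : ℕ,
    (∏ k ∈ range n, (C (b * f k) * X + 1)).coeff m
      = b ^ m * (∏ k ∈ range n, (C (f k) * X + 1)).coeff m := by
  induction n with
  | zero =>
    intro m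
    simp only [range_zero, prod_empty, coeff_one]
    split <;> simp_all
  | succ n ih =>
    intro m
    rw [prod_range_succ, prod_range_succ, coeff_mul_linear, coeff_mul_linear]
    cases m with
    | zero =>
      rw [coeff_mul_X_zero, coeff_mul_X_zero, mul_zero, mul_zero, zero_add, zero_add, ih 0]
    | succ m =>
      rw [coeff_mul_X, coeff_mul_X, ih m, ih (m + 1)]
      ring

/-- the generating polynomial `∏_{k<n} (ζ^{n-1-2k} X + 1)` -/
noncomputable def qprodC (ζ : ℂ) (n : ℕ) : Polynomial ℂ :=
  ∏ k ∈ range n, (C (ζ ^ (n - 1 - k) * ζ⁻¹ ^ k) * X + 1)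

lemma coeff_qprodC (ζ : ℂ) (hζ0 : ζ ≠ 0) : ∀ n m : ℕ, (qprodC ζ n).coeff m = qbinomC ζ n m := by
  intro n
  induction n with
  | zero =>
    intro m
    cases m with
    | zero => simp [qprodC, qbinomC]
    | succ m =>
      have h0 : qbinomC ζ 0 (m + 1) = 0 := rfl
      simp [qprodC, h0, coeff_one]
  | succ n ih =>
    have key : qprodC ζ (n + 1)
        = (∏ k ∈ range n, (C (ζ⁻¹ * (ζ ^ (n - 1 - k) * ζ⁻¹ ^ k)) * X + 1))
          * (C (ζ ^ n) * X + 1) := by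
      rw [qprodC, prod_range_succ']
      congr 1
      · refine prod_congr rfl fun k hk => ?_
        have hk' : k < n := mem_range.mp hk
        have he : n + 1 - 1 - (k + 1) = n - 1 - k := by omega
        rw [he, pow_succ]
        ring_nf
      · have : n + 1 - 1 - 0 = n := by omega
        rw [this, pow_zero, mul_one]
    intro m
    simp only [qprodC] at ih
    rw [key, coeff_mul_linear]
    cases m with
    | zero =>
      rw [coeff_mul_X_zero, mul_zero, zero_add, coeff_prod_scale, ih, pow_zero, one_mul, qbinomC_zero, qbinomC_zero]
    | succ k =>
      rw [coeff_mul_X, coeff_prod_scale, coeff_prod_scale, ih, ih, qbinomC_succ_succ]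
      rcases le_or_gt k n with hkn | hkn
      · have : (ζ:ℂ) ^ n * (ζ⁻¹ ^ k) = ζ ^ (n - k) := by
          rw [← Nat.sub_add_cancel hkn, pow_add]
          field_simp
          rw [Nat.add_sub_cancel, mul_assoc, ← mul_pow, mul_one_div_cancel hζ0, one_pow, mul_one]
        rw [← this]
        ring
      · rw [qbinomC_eq_zero_of_lt ζ n k hkn]
        ring

lemma prod_linear_primroot (ℓ : ℕ) (hℓ : 0 < ℓ) (hodd : Odd ℓ) (ξ : ℂ)
    (hξ : IsPrimitiveRoot ξ ℓ) (a : ℂ) (ha : a ^ ℓ = 1) :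
    ∏ k ∈ range ℓ, (C (a * ξ ^ k) * X + 1) = X ^ ℓ + 1 := by
  have hξ0 : ξ ≠ 0 := hξ.ne_zero hℓ.ne'
  have ha0 : a ≠ 0 := by
    intro h
    rw [h, zero_pow hℓ.ne'] at ha
    exact one_ne_zero ha.symm
  have hfac : ∀ k : ℕ, C (a * ξ ^ k) * X + 1
      = C (a * ξ ^ k) * (X - C (ξ⁻¹ ^ k * (-a⁻¹))) := by
    intro k
    have hmul : a * ξ ^ k * (ξ⁻¹ ^ k * (-a⁻¹)) = -1 := by
      field_simp
      rw [← mul_pow, mul_one_div_cancel hξ0, one_pow]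
    rw [mul_sub, ← C_mul, hmul, map_neg, C_1, sub_neg_eq_add]
  have hsum : ξ ^ (∑ k ∈ range ℓ, k) = 1 := by
    obtain ⟨j, hj⟩ := hodd
    subst hj
    have h1 : ∑ k ∈ range (2 * j + 1), k = (2 * j + 1) * j := by
      rw [Finset.sum_range_id, show 2 * j + 1 - 1 = 2 * j from by omega,
        show (2 * j + 1) * (2 * j) = 2 * ((2 * j + 1) * j) from by ring,
        Nat.mul_div_cancel_left _ (by norm_num)]
    rw [h1, pow_mul, hξ.pow_eq_one, one_pow]
  have hC : (∏ k ∈ range ℓ, C (a * ξ ^ k)) = 1 := by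
    rw [← map_prod, Finset.prod_mul_distrib, Finset.prod_const,
      Finset.card_range, Finset.prod_pow_eq_pow_sum, hsum, ha, one_mul, C_1]
  have he : (-a⁻¹) ^ ℓ = -1 := by
    rw [hodd.neg_pow, inv_pow, ha, inv_one]
  calc ∏ k ∈ range ℓ, (C (a * ξ ^ k) * X + 1)
      = (∏ k ∈ range ℓ, C (a * ξ ^ k))
        * ∏ k ∈ range ℓ, (X - C (ξ⁻¹ ^ k * (-a⁻¹))) := by
        rw [← Finset.prod_mul_distrib]
        exact prod_congr rfl fun k _ => hfac k
    _ = ∏ k ∈ range ℓ, (X - C (ξ⁻¹ ^ k * (-a⁻¹))) := by rw [hC, one_mul]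
    _ = X ^ ℓ + 1 := by
        rw [← X_pow_sub_C_eq_prod hξ.inv hℓ he, map_neg, C_1, sub_neg_eq_add]

lemma qprodC_add_period (ℓ : ℕ) (hℓ : 0 < ℓ) (hodd : Odd ℓ) (ζ : ℂ)
    (hζ : IsPrimitiveRoot ζ ℓ) (n : ℕ) :
    qprodC ζ (n + ℓ) = (X ^ ℓ + 1) * qprodC ζ n := by
  have hζ0 : ζ ≠ 0 := hζ.ne_zero hℓ.ne'
  have hζℓ : ζ ^ ℓ = 1 := hζ.pow_eq_one
  have hinvℓ : ζ⁻¹ ^ ℓ = 1 := by rw [inv_pow, hζℓ, inv_one]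
  have hsplit : qprodC ζ (n + ℓ)
      = (∏ k ∈ range ℓ, (C (ζ ^ (ℓ + n - 1 - k) * ζ⁻¹ ^ k) * X + 1))
        * ∏ k ∈ range n, (C (ζ ^ (ℓ + n - 1 - (ℓ + k)) * ζ⁻¹ ^ (ℓ + k)) * X + 1) := by
    rw [qprodC, show n + ℓ = ℓ + n by omega, prod_range_add]
  rw [hsplit]
  have htail : (∏ k ∈ range n, (C (ζ ^ (ℓ + n - 1 - (ℓ + k)) * ζ⁻¹ ^ (ℓ + k)) * X + 1))
      = qprodC ζ n := by
    rw [qprodC]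
    refine prod_congr rfl fun k _ => ?_
    have h1 : ℓ + n - 1 - (ℓ + k) = n - 1 - k := by omega
    rw [h1, pow_add, hinvℓ, one_mul]
  have hhead : (∏ k ∈ range ℓ, (C (ζ ^ (ℓ + n - 1 - k) * ζ⁻¹ ^ k) * X + 1))
      = X ^ ℓ + 1 := by
    have hcoe : ∀ k ∈ range ℓ,
        C (ζ ^ (ℓ + n - 1 - k) * ζ⁻¹ ^ k) * X + 1
          = C (ζ ^ (ℓ + n - 1) * (ζ⁻¹ ^ 2) ^ k) * X + 1 := by
      intro k hk
      have hk' : k < ℓ := mem_range.mp hk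
      have h1 : ℓ + n - 1 - k + 2 * k = ℓ + n - 1 + k := by omega
      have h2 : ζ ^ (ℓ + n - 1 - k) * ζ⁻¹ ^ k = ζ ^ (ℓ + n - 1) * (ζ⁻¹ ^ 2) ^ k := by
        rw [← pow_mul, inv_pow, inv_pow, ← div_eq_mul_inv, ← div_eq_mul_inv,
          div_eq_div_iff (pow_ne_zero _ hζ0) (pow_ne_zero _ hζ0),
          ← pow_add, ← pow_add, h1, Nat.add_comm (ℓ + n - 1) k, Nat.add_comm k (ℓ + n - 1)]
      rw [h2]
    rw [prod_congr rfl hcoe]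
    have hprim : IsPrimitiveRoot (ζ⁻¹ ^ 2) ℓ :=
      hζ.inv.pow_of_coprime 2 (Nat.coprime_two_left.mpr hodd)
    have ha : (ζ ^ (ℓ + n - 1)) ^ ℓ = 1 := by
      rw [← pow_mul, mul_comm, pow_mul, hζℓ, one_pow]
    exact prod_linear_primroot ℓ hℓ hodd _ hprim _ ha
  rw [htail, hhead]

lemma qbinomC_period (ℓ : ℕ) (hℓ : 0 < ℓ) (hodd : Odd ℓ) (ζ : ℂ)
    (hζ : IsPrimitiveRoot ζ ℓ) (n m : ℕ) :
    qbinomC ζ (n + ℓ) m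
      = (if ℓ ≤ m then qbinomC ζ n (m - ℓ) else 0) + qbinomC ζ n m := by
  have hζ0 : ζ ≠ 0 := hζ.ne_zero hℓ.ne'
  rw [← coeff_qprodC ζ hζ0, qprodC_add_period ℓ hℓ hodd ζ hζ n,
    show (X ^ ℓ + 1) * qprodC ζ n = qprodC ζ n * X ^ ℓ + qprodC ζ n by ring,
    coeff_add, coeff_mul_X_pow']
  simp only [coeff_qprodC ζ hζ0]

lemma qbinom_lucas_aux (ℓ : ℕ) (hℓ : 0 < ℓ) (hodd : Odd ℓ) (ζ : ℂ)
    (hζ : IsPrimitiveRoot ζ ℓ) :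
    ∀ n₁ m₁ n₀ m₀ : ℕ, n₀ < ℓ → m₀ < ℓ →
      qbinomC ζ (ℓ * n₁ + n₀) (ℓ * m₁ + m₀) = (n₁.choose m₁ : ℂ) * qbinomC ζ n₀ m₀ := by
  intro n₁
  induction n₁ with
  | zero =>
    intro m₁ n₀ m₀ hn₀ hm₀
    cases m₁ with
    | zero => simp
    | succ j =>
      have h1 : ℓ ≤ ℓ * (j + 1) := Nat.le_mul_of_pos_right ℓ (by omega)
      rw [qbinomC_eq_zero_of_lt ζ _ _ (by omega), Nat.choose_eq_zero_of_lt (by omega)]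
      simp
  | succ n₁ ih =>
    intro m₁ n₀ m₀ hn₀ hm₀
    have hrw : ℓ * (n₁ + 1) + n₀ = (ℓ * n₁ + n₀) + ℓ := by ring
    rw [hrw, qbinomC_period ℓ hℓ hodd ζ hζ]
    cases m₁ with
    | zero =>
      rw [if_neg (by omega), zero_add, ih 0 n₀ m₀ hn₀ hm₀]
      simp
    | succ j =>
      have h1 : ℓ * (j + 1) = ℓ * j + ℓ := by ring
      rw [if_pos (by omega), show ℓ * (j + 1) + m₀ - ℓ = ℓ * j + m₀ by omega,
        ih (j + 1) n₀ m₀ hn₀ hm₀, ih j n₀ m₀ hn₀ hm₀, Nat.choose_succ_succ]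
      push_cast
      ring

/-- The `q`-Lucas theorem in the balanced convention: writing `n = ℓn₁ + n₀`, `m = ℓm₁ + m₀`
with `0 ≤ n₀, m₀ < ℓ`, we have `[n choose m]_ζ = (n₁ choose m₁) [n₀ choose m₀]_ζ` if `m₀ ≤ n₀`,
and `[n choose m]_ζ = 0` if `m ≤ n` and `m₀ > n₀`. -/
theorem qbinom_lucas (ℓ : ℕ) (hℓ : 0 < ℓ) (hodd : Odd ℓ) (ζ : ℂ)
    (hζ : IsPrimitiveRoot ζ ℓ)
    (n m n₁ n₀ m₁ m₀ : ℕ) (hn : n = ℓ * n₁ + n₀) (hn₀ : n₀ < ℓ)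
    (hm : m = ℓ * m₁ + m₀) (hm₀ : m₀ < ℓ) :
    (m₀ ≤ n₀ → qbinomC ζ n m = (n₁.choose m₁ : ℂ) * qbinomC ζ n₀ m₀) ∧
    (m ≤ n → n₀ < m₀ → qbinomC ζ n m = 0) := by
  constructor
  · intro _
    rw [hn, hm, qbinom_lucas_aux ℓ hℓ hodd ζ hζ n₁ m₁ n₀ m₀ hn₀ hm₀]
  · intro _ h
    rw [hn, hm, qbinom_lucas_aux ℓ hℓ hodd ζ hζ n₁ m₁ n₀ m₀ hn₀ hm₀,
      qbinomC_eq_zero_of_lt ζ n₀ m₀ h, mul_zero]
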